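/- Let f = Σ_{n≥0} aₙxⁿ be a convergent real formal power series and let c, d ∈ ℝ. Then shifting f first by c and then by d equals shifting f by c + d: for every n ∈ ℕ₀, Σ_{m≥n} C(m,n)·(Σ_{l≥m} C(l,m)·a_l·c^{l−m})·d^{m−n} = Σ_{l≥n} C(l,n)·a_l·(c+d)^{l−n}. -/

import Mathlib

open Filter Finset

lemma myaux_choose_le (n k : ℕ) : n.choose k ≤ 2 ^ n := by
  rcases le_or_gt k n with h | h
  · calc n.choose k ≤ ∑ m ∈ range (n+1), n.choose m :=
        Finset.single_le_sum (fun i _ => Nat.zero_le _) (mem_range.mpr (Nat.lt_succ_of_le h))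
    _ = 2 ^ n := Nat.sum_range_choose n
  · simp [Nat.choose_eq_zero_of_lt h]

lemma myaux_summable (a : ℕ → ℝ)
    (hconv : ∀ c : ℝ, Filter.Tendsto (fun n : ℕ => a n * c ^ n) Filter.atTop (nhds 0))
    (c d : ℝ) (n : ℕ) :
    Summable (fun p : ℕ × ℕ =>
      ((p.2 + n).choose n : ℝ) * ((p.1 + (p.2 + n)).choose (p.2 + n) : ℝ) *
        a (p.1 + (p.2 + n)) * c ^ p.1 * d ^ p.2) := by
  obtain ⟨t, ht⟩ : ∃ t : ℝ, t = |c| + |d| + 1 := ⟨_, rfl⟩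
  have habsc := abs_nonneg c
  have habsd := abs_nonneg d
  have ht1 : (1 : ℝ) ≤ t := by rw [ht]; linarith
  have ht0 : (0 : ℝ) < t := by linarith
  obtain ⟨ρ, hρdef⟩ : ∃ ρ : ℝ, ρ = max |c| |d| / t := ⟨_, rfl⟩
  have hρ0 : 0 ≤ ρ := by rw [hρdef]; positivity
  have hρ1 : ρ < 1 := by
    rw [hρdef, div_lt_one ht0]
    rcases max_cases |c| |d| with ⟨h, _⟩ | ⟨h, _⟩ <;> rw [h] <;> linarith
  have hc : |c| ≤ ρ * t := by
    rw [hρdef, div_mul_cancel₀ _ (ne_of_gt ht0)]; exact le_max_left _ _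
  have hd : |d| ≤ ρ * t := by
    rw [hρdef, div_mul_cancel₀ _ (ne_of_gt ht0)]; exact le_max_right _ _
  obtain ⟨r, hr⟩ : ∃ r : ℝ, r = 4 * (t * t) := ⟨_, rfl⟩
  have hr0 : (0 : ℝ) ≤ r := by rw [hr]; positivity
  obtain ⟨M, hM⟩ := ((hconv r).abs).bddAbove_range
  have hMle : ∀ k, |a k| * r ^ k ≤ M := by
    intro k
    have := hM (Set.mem_range_self (f := fun k => |a k * r ^ k|) k)
    simpa [abs_mul, abs_pow, abs_of_nonneg hr0] using this
  have hM0 : 0 ≤ M := le_trans (by positivity) (hMle 0)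
  have key : ∀ p : ℕ × ℕ,
      ‖((p.2 + n).choose n : ℝ) * ((p.1 + (p.2 + n)).choose (p.2 + n) : ℝ) *
        a (p.1 + (p.2 + n)) * c ^ p.1 * d ^ p.2‖
      ≤ (2 ^ n * M) * (ρ ^ p.1 * ρ ^ p.2) := by
    rintro ⟨l, m⟩
    have h1 : ((m + n).choose n : ℝ) ≤ 2 ^ (m + n) := by
      exact_mod_cast myaux_choose_le (m + n) n
    have h2 : ((l + (m + n)).choose (m + n) : ℝ) ≤ 2 ^ (l + (m + n)) := by
      exact_mod_cast myaux_choose_le (l + (m + n)) (m + n)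
    have hb1 : (0:ℝ) ≤ ((m + n).choose n : ℝ) := by positivity
    have hb2 : (0:ℝ) ≤ ((l + (m + n)).choose (m + n) : ℝ) := by positivity
    show ‖((m + n).choose n : ℝ) * ((l + (m + n)).choose (m + n) : ℝ) *
        a (l + (m + n)) * c ^ l * d ^ m‖ ≤ (2 ^ n * M) * (ρ ^ l * ρ ^ m)
    calc ‖((m + n).choose n : ℝ) * ((l + (m + n)).choose (m + n) : ℝ) *
        a (l + (m + n)) * c ^ l * d ^ m‖
        = ((m + n).choose n : ℝ) * ((l + (m + n)).choose (m + n) : ℝ) *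
          |a (l + (m + n))| * |c| ^ l * |d| ^ m := by
          simp [Real.norm_eq_abs, abs_mul, abs_pow, abs_of_nonneg hb1, abs_of_nonneg hb2]
      _ ≤ (2:ℝ) ^ (m + n) * 2 ^ (l + (m + n)) * |a (l + (m + n))| * (ρ * t) ^ l * (ρ * t) ^ m := by
          gcongr
      _ = (ρ ^ l * ρ ^ m) *
            (|a (l + (m + n))| * ((2:ℝ) ^ (l + 2*m + 2*n) * (t ^ l * t ^ m))) := by
          ring
      _ ≤ (ρ ^ l * ρ ^ m) *
            (|a (l + (m + n))| * ((2:ℝ) ^ (2*(l + (m + n))) *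
              (t ^ (l + (m + n)) * t ^ (l + (m + n))))) := by
          gcongr <;> first
            | positivity
            | exact abs_nonneg _
            | exact one_le_two
            | exact ht1
            | omega
      _ = (ρ ^ l * ρ ^ m) * (|a (l + (m + n))| * r ^ (l + (m + n))) := by
          have e4 : ((2:ℝ) ^ 2) ^ (l + (m + n)) = (2:ℝ) ^ (2*(l + (m + n))) := by
            rw [← pow_mul]
          rw [hr, show (4:ℝ) = 2 ^ 2 by norm_num, mul_pow, e4]; ring
      _ ≤ (ρ ^ l * ρ ^ m) * M :=
          mul_le_mul_of_nonneg_left (hMle _) (by positivity)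
      _ ≤ (2 ^ n * M) * (ρ ^ l * ρ ^ m) := by
          nlinarith [pow_le_pow_right₀ (one_le_two (α := ℝ)) (Nat.zero_le n),
            mul_nonneg (mul_nonneg (pow_nonneg hρ0 l) (pow_nonneg hρ0 m)) hM0]
  have hg : Summable (fun p : ℕ × ℕ => (2 ^ n * M) * (ρ ^ p.1 * ρ ^ p.2)) :=
    ((summable_geometric_of_lt_one hρ0 hρ1).mul_of_nonneg
      (summable_geometric_of_lt_one hρ0 hρ1) (fun _ => by positivity)
      (fun _ => by positivity)).mul_left _
  exact Summable.of_norm_bounded hg key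

-- per-k finite sum identity
lemma myaux_antidiag (a : ℕ → ℝ) (c d : ℝ) (n k : ℕ) :
    ∑ p ∈ antidiagonal k,
      (((p.2 + n).choose n : ℝ) * ((p.1 + (p.2 + n)).choose (p.2 + n) : ℝ) *
        a (p.1 + (p.2 + n)) * c ^ p.1 * d ^ p.2)
      = ((k + n).choose n : ℝ) * a (k + n) * (c + d) ^ k := by
  have : ∀ p ∈ antidiagonal k,
      (((p.2 + n).choose n : ℝ) * ((p.1 + (p.2 + n)).choose (p.2 + n) : ℝ) *
        a (p.1 + (p.2 + n)) * c ^ p.1 * d ^ p.2)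
      = ((k + n).choose n : ℝ) * a (k + n) * ((k.choose p.2 : ℝ) * c ^ p.1 * d ^ p.2) := by
    rintro ⟨l, m⟩ hp
    rw [Finset.HasAntidiagonal.mem_antidiagonal] at hp
    have hk : l + (m + n) = k + n := by omega
    have hid : (k + n).choose (m + n) * (m + n).choose n = (k + n).choose n * k.choose m := by
      have := Nat.choose_mul (n := k + n) (k := m + n) (s := n) (by omega)
      simpa using this
    have hidR : ((m + n).choose n : ℝ) * ((k + n).choose (m + n) : ℝ)
        = ((k + n).choose n : ℝ) * (k.choose m : ℝ) := by
      rw [mul_comm]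
      exact_mod_cast congrArg (Nat.cast (R := ℝ)) hid
    rw [hk]
    rw [show (((m + n).choose n : ℝ) * ((k + n).choose (m + n) : ℝ) * a (k + n) * c ^ l * d ^ m)
      = (((m + n).choose n : ℝ) * ((k + n).choose (m + n) : ℝ)) * (a (k + n) * c ^ l * d ^ m) by ring,
      hidR]
    ring
  rw [Finset.sum_congr rfl this, ← Finset.mul_sum]
  congr 1
  rw [add_pow c d k, Finset.Nat.sum_antidiagonal_eq_sum_range_succ
    (fun i j => (k.choose j : ℝ) * c ^ i * d ^ j) k]
  refine Finset.sum_congr rfl fun i hi => ?_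
  rw [Nat.choose_symm (Nat.lt_succ_iff.mp (mem_range.mp hi))]
  ring

set_option maxHeartbeats 1000000 in
theorem shift_shift (a : ℕ → ℝ)
    (hconv : ∀ c : ℝ, Filter.Tendsto (fun n : ℕ => a n * c ^ n) Filter.atTop (nhds 0))
    (c d : ℝ) :
    ∀ n : ℕ,
      (∑' m : ℕ, ((m + n).choose n : ℝ) *
          (∑' l : ℕ, ((l + (m + n)).choose (m + n) : ℝ) * a (l + (m + n)) * c ^ l) * d ^ m)
        = ∑' l : ℕ, ((l + n).choose n : ℝ) * a (l + n) * (c + d) ^ l := by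
  intro n
  have hF := myaux_summable a hconv c d n
  set F : ℕ × ℕ → ℝ := fun p =>
    ((p.2 + n).choose n : ℝ) * ((p.1 + (p.2 + n)).choose (p.2 + n) : ℝ) *
      a (p.1 + (p.2 + n)) * c ^ p.1 * d ^ p.2 with hFdef
  have hterm : ∀ m : ℕ, ((m + n).choose n : ℝ) *
      (∑' l : ℕ, ((l + (m + n)).choose (m + n) : ℝ) * a (l + (m + n)) * c ^ l) * d ^ m
      = ∑' l : ℕ, F (l, m) := by
    intro m
    rw [← tsum_mul_left, ← tsum_mul_right]
    exact tsum_congr fun l => by simp only [hFdef]; ring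
  calc (∑' m : ℕ, ((m + n).choose n : ℝ) *
          (∑' l : ℕ, ((l + (m + n)).choose (m + n) : ℝ) * a (l + (m + n)) * c ^ l) * d ^ m)
      = ∑' m : ℕ, ∑' l : ℕ, F (l, m) := tsum_congr hterm
    _ = ∑' q : ℕ × ℕ, F (q.2, q.1) := by
        have hswap : Summable (fun q : ℕ × ℕ => F (q.2, q.1)) :=
          (Equiv.prodComm ℕ ℕ).summable_iff.mpr hF
        exact (Summable.tsum_prod' hswap (fun b => hswap.prod_factor b)).symm
    _ = ∑' p : ℕ × ℕ, F p := (Equiv.prodComm ℕ ℕ).tsum_eq F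
    _ = ∑' x : (Σ k : ℕ, Finset.HasAntidiagonal.antidiagonal k), F (Finset.HasAntidiagonal.sigmaAntidiagonalEquivProd x) :=
        (Finset.HasAntidiagonal.sigmaAntidiagonalEquivProd.tsum_eq F).symm
    _ = ∑' k : ℕ, ∑' p : (Finset.HasAntidiagonal.antidiagonal k : Finset (ℕ × ℕ)), F p := by
        have hs : Summable (fun x : (Σ k : ℕ, Finset.HasAntidiagonal.antidiagonal k) =>
            F (Finset.HasAntidiagonal.sigmaAntidiagonalEquivProd x)) :=
          Finset.HasAntidiagonal.sigmaAntidiagonalEquivProd.summable_iff.mpr hF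
        exact Summable.tsum_sigma' (fun b => hs.sigma_factor b) hs
    _ = ∑' k : ℕ, ((k + n).choose n : ℝ) * a (k + n) * (c + d) ^ k := by
        refine tsum_congr fun k => ?_
        rw [Finset.tsum_subtype (Finset.HasAntidiagonal.antidiagonal k) F]
        exact myaux_antidiag a c d n k
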